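/- For a reflexive digraph H, a linear ordering < of V(H) is a Min-Max ordering if and only if for all vertices i, j, k with i < j < k (or k < j < i), ik ∈ A(H) implies ij ∈ A(H) and jk ∈ A(H). -/

import Mathlib

/-- `lt` is a Min-Max ordering of the digraph with arc relation `A`. -/
def IsMinMaxOrdering {V : Type*} (A : V → V → Prop) (lt : V → V → Prop) : Prop :=
  IsStrictTotalOrder V lt ∧
    ∀ i j s r : V, lt i j → lt s r → A i r → A j s → A i s ∧ A j r

/-- The digraph with arc relation `A` admits a Min-Max ordering. -/
def HasMinMaxOrdering {V : Type*} (A : V → V → Prop) : Prop :=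
  ∃ lt : V → V → Prop, IsMinMaxOrdering A lt

/-- For a reflexive digraph, a linear ordering is a Min-Max ordering iff for all
$i < j < k$ (or $k < j < i$), $ik ∈ A(H)$ implies $ij, jk ∈ A(H)$. -/
theorem stmt1 {V : Type*} (A : V → V → Prop) (hrefl : ∀ v, A v v)
    (lt : V → V → Prop) (hlt : IsStrictTotalOrder V lt) :
    IsMinMaxOrdering A lt ↔
      ∀ i j k : V, ((lt i j ∧ lt j k) ∨ (lt k j ∧ lt j i)) → A i k → A i j ∧ A j k := by
  constructor
  · rintro ⟨_, h⟩ i j k hord hik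
    rcases hord with ⟨hij, hjk⟩ | ⟨hkj, hji⟩
    · exact h i j j k hij hjk hik (hrefl j)
    · have := h j i k j hji hkj (hrefl j) hik
      exact ⟨this.2, this.1⟩
  · intro h
    refine ⟨hlt, ?_⟩
    intro i j s r hij hsr hir hjs
    constructor
    · rcases @trichotomous_of _ lt hlt.toTrichotomous i s with his | rfl | hsi
      · exact (h i s r (Or.inl ⟨his, hsr⟩) hir).1
      · exact hrefl i
      · exact (h j i s (Or.inr ⟨hsi, hij⟩) hjs).2
    · rcases @trichotomous_of _ lt hlt.toTrichotomous j r with hjr | rfl | hrj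
      · exact (h i j r (Or.inl ⟨hij, hjr⟩) hir).2
      · exact hrefl j
      · exact (h j r s (Or.inr ⟨hsr, hrj⟩) hjs).1
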